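/- arXiv:nlin/0306036 — 2 statements merged into one kernel-verified Lean document; each statement's English description precedes it below -/
import Mathlib

section
/- (Lemma 8, identity (5.9)) Let ρ₁ ∈ ℝ, ρ₂ = −(2/√5)ρ₁, ρ₃ = (2√3/√10)ρ₁, f = ρ₁e₁ + ρ₂e₂ + ρ₃e₃, and let P denote the orthogonal projection of ℝ⁴ onto the null space of L. If g ∈ ℝ⁴ is orthogonal to the null space of L and satisfies Lg = Ve₁ − P(Ve₁), then ⟨g, Vf⟩ = ρ₁/(2B). -/
open Finset

/-- The linearized collision operator of the one-dimensional Broadwell model with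
collision frequency `B`, as a `4 × 4` matrix. -/
noncomputable def LBmat (B : ℝ) : Matrix (Fin 4) (Fin 4) ℝ :=
  (-(B / 3)) • !![-2, Real.sqrt 2, Real.sqrt 2, -2;
                  Real.sqrt 2, -1, -1, Real.sqrt 2;
                  Real.sqrt 2, -1, -1, Real.sqrt 2;
                  -2, Real.sqrt 2, Real.sqrt 2, -2]

/-- `e₁ = (√2/2, 0, 0, −√2/2)`. -/
noncomputable def eB1 : EuclideanSpace ℝ (Fin 4) :=
  WithLp.toLp 2 ![Real.sqrt 2 / 2, 0, 0, -(Real.sqrt 2 / 2)]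

/-- `e₂ = (1/√10, 2/√5, 0, 1/√10)`. -/
noncomputable def eB2 : EuclideanSpace ℝ (Fin 4) :=
  WithLp.toLp 2 ![1 / Real.sqrt 10, 2 / Real.sqrt 5, 0, 1 / Real.sqrt 10]

/-- `e₃ = (1/√15, −1/√30, √5/√6, 1/√15)`. -/
noncomputable def eB3 : EuclideanSpace ℝ (Fin 4) :=
  WithLp.toLp 2 ![1 / Real.sqrt 15, -(1 / Real.sqrt 30), Real.sqrt 5 / Real.sqrt 6, 1 / Real.sqrt 15]

open scoped RealInnerProductSpace

/-- The Broadwell linearized collision operator as a linear map on `ℝ⁴` with the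
Euclidean inner product. -/
noncomputable def LB (B : ℝ) : EuclideanSpace ℝ (Fin 4) →ₗ[ℝ] EuclideanSpace ℝ (Fin 4) :=
  Matrix.toEuclideanLin (LBmat B)

/-- The diagonal velocity matrix `V = diag(1, 1/2, −1/2, −1)` applied to `f`. -/
noncomputable def VB (f : EuclideanSpace ℝ (Fin 4)) : EuclideanSpace ℝ (Fin 4) :=
  WithLp.toLp 2 ![f 0, f 1 / 2, -(f 2) / 2, -(f 3)]

theorem LB_all (B : ℝ) (v : EuclideanSpace ℝ (Fin 4)) :
    (LB B v) 0 = -(B/3) * (-2 * v 0 + Real.sqrt 2 * v 1 + Real.sqrt 2 * v 2 - 2 * v 3) ∧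
    (LB B v) 1 = -(B/3) * (Real.sqrt 2 * v 0 - v 1 - v 2 + Real.sqrt 2 * v 3) ∧
    (LB B v) 2 = -(B/3) * (Real.sqrt 2 * v 0 - v 1 - v 2 + Real.sqrt 2 * v 3) ∧
    (LB B v) 3 = -(B/3) * (-2 * v 0 + Real.sqrt 2 * v 1 + Real.sqrt 2 * v 2 - 2 * v 3) := by
  refine ⟨?_, ?_, ?_, ?_⟩ <;>
  · simp [LB, LBmat, Matrix.toEuclideanLin_apply, Matrix.mulVec, dotProduct,
      Fin.sum_univ_four, Matrix.vecHead, Matrix.vecTail, Matrix.smul_apply,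
      Matrix.cons_val_zero, Matrix.cons_val_one, Matrix.head_cons]
    ring

theorem mem_ker_of_components (B : ℝ) (v : EuclideanSpace ℝ (Fin 4))
    (hx : -2 * v 0 + Real.sqrt 2 * v 1 + Real.sqrt 2 * v 2 - 2 * v 3 = 0)
    (hy : Real.sqrt 2 * v 0 - v 1 - v 2 + Real.sqrt 2 * v 3 = 0) :
    v ∈ LinearMap.ker (LB B) := by
  rw [LinearMap.mem_ker]
  obtain ⟨h0, h1, h2, h3⟩ := LB_all B v
  ext i
  fin_cases i
  · show (LB B) v 0 = 0; rw [h0, hx, mul_zero]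
  · show (LB B) v 1 = 0; rw [h1, hy, mul_zero]
  · show (LB B) v 2 = 0; rw [h2, hy, mul_zero]
  · show (LB B) v 3 = 0; rw [h3, hx, mul_zero]

theorem k1_mem (B : ℝ) : (WithLp.toLp 2 ![1, Real.sqrt 2, 0, 0] : EuclideanSpace ℝ (Fin 4)) ∈ LinearMap.ker (LB B) := by
  have h2 : Real.sqrt 2 * Real.sqrt 2 = 2 := Real.mul_self_sqrt (by norm_num)
  apply mem_ker_of_components <;> · simp; try linarith

theorem k2_mem (B : ℝ) : (WithLp.toLp 2 ![(0:ℝ), 1, -1, 0] : EuclideanSpace ℝ (Fin 4)) ∈ LinearMap.ker (LB B) := by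
  apply mem_ker_of_components <;> · simp; try linarith

theorem k3_mem (B : ℝ) : (WithLp.toLp 2 ![0, 0, Real.sqrt 2, 1] : EuclideanSpace ℝ (Fin 4)) ∈ LinearMap.ker (LB B) := by
  have h2 : Real.sqrt 2 * Real.sqrt 2 = 2 := Real.mul_self_sqrt (by norm_num)
  apply mem_ker_of_components <;> · simp; try linarith

/-- Lemma 8, identity (5.9): with `ρ₂ = −(2/√5)ρ₁`, `ρ₃ = (2√3/√10)ρ₁`,
`f = ρ₁e₁ + ρ₂e₂ + ρ₃e₃` and `P` the orthogonal projection onto the null space of `L`,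
if `g ⟂ ker L` and `Lg = Ve₁ − P(Ve₁)`, then `⟨g, Vf⟩ = ρ₁/(2B)`. -/
theorem broadwell_inner_Linv_Ve1 (B : ℝ) (hB : 0 < B) (ρ₁ ρ₂ ρ₃ : ℝ)
    (h2 : ρ₂ = -(2 / Real.sqrt 5) * ρ₁) (h3 : ρ₃ = 2 * Real.sqrt 3 / Real.sqrt 10 * ρ₁)
    (f : EuclideanSpace ℝ (Fin 4)) (hf : f = ρ₁ • eB1 + ρ₂ • eB2 + ρ₃ • eB3)
    (g : EuclideanSpace ℝ (Fin 4))
    (hg₁ : ∀ h ∈ LinearMap.ker (LB B), ⟪g, h⟫ = 0)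
    (hg₂ : LB B g = VB eB1 -
      (Submodule.orthogonalProjectionOnto (LinearMap.ker (LB B)) (VB eB1) : EuclideanSpace ℝ (Fin 4))) :
    ⟪g, VB f⟫ = ρ₁ / (2 * B) := by
  have hBne : B ≠ 0 := ne_of_gt hB
  have ha : Real.sqrt 2 * Real.sqrt 2 = 2 := Real.mul_self_sqrt (by norm_num)
  have ha0 : (0:ℝ) < Real.sqrt 2 := Real.sqrt_pos.mpr (by norm_num)
  -- orthogonality relations on g
  have hk1 := hg₁ _ (k1_mem B)
  have hk2 := hg₁ _ (k2_mem B)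
  have hk3 := hg₁ _ (k3_mem B)
  simp [PiLp.inner_apply, RCLike.inner_apply, Fin.sum_univ_four] at hk1 hk2 hk3
  -- kernel elements satisfy the linear relation
  have hker0 : ∀ v ∈ LinearMap.ker (LB B),
      -2 * v 0 + Real.sqrt 2 * v 1 + Real.sqrt 2 * v 2 - 2 * v 3 = 0 := by
    intro v hv
    rw [LinearMap.mem_ker] at hv
    have h0 : (LB B) v 0 = 0 := by rw [hv]; rfl
    rw [(LB_all B v).1] at h0
    rcases mul_eq_zero.mp h0 with h | h
    · exfalso; apply hBne; linarith
    · exact h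
  -- projection term vanishes under the functional
  have hproj := hker0 _ (Submodule.orthogonalProjectionOnto (LinearMap.ker (LB B)) (VB eB1)).2
  -- apply the functional to hg₂
  have hphi := congrArg (fun w : EuclideanSpace ℝ (Fin 4) =>
    -2 * w 0 + Real.sqrt 2 * w 1 + Real.sqrt 2 * w 2 - 2 * w 3) hg₂
  simp only [PiLp.sub_apply] at hphi
  rw [(LB_all B g).1, (LB_all B g).2.1, (LB_all B g).2.2.1, (LB_all B g).2.2.2] at hphi
  simp [VB, eB1] at hphi
  simp [VB, eB1] at hproj
  -- explicit g components
  have e0 : g 0 = -(Real.sqrt 2 * g 1) := by linear_combination hk1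
  have e2 : g 2 = g 1 := by linarith
  have e3 : g 3 = -(Real.sqrt 2 * g 1) := by linear_combination hk3 + Real.sqrt 2 * hk2
  rw [e0, e2, e3] at hphi
  have hs6 : 6 * B * g 1 = -1 := by
    linear_combination (Real.sqrt 2/4) * hphi - (Real.sqrt 2/4) * hproj +
      (-(B/3)*(Real.sqrt 2*Real.sqrt 2 + 9)*(g 1) - 1/2) * ha
  -- sqrt facts
  have hb : Real.sqrt 3 * Real.sqrt 3 = 3 := Real.mul_self_sqrt (by norm_num)
  have hc : Real.sqrt 5 * Real.sqrt 5 = 5 := Real.mul_self_sqrt (by norm_num)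
  have hb0 : (0:ℝ) < Real.sqrt 3 := Real.sqrt_pos.mpr (by norm_num)
  have hc0 : (0:ℝ) < Real.sqrt 5 := Real.sqrt_pos.mpr (by norm_num)
  have h10 : Real.sqrt 10 = Real.sqrt 2 * Real.sqrt 5 := by
    rw [show (10:ℝ) = 2*5 by norm_num, Real.sqrt_mul (by norm_num)]
  have h15 : Real.sqrt 15 = Real.sqrt 3 * Real.sqrt 5 := by
    rw [show (15:ℝ) = 3*5 by norm_num, Real.sqrt_mul (by norm_num)]
  have h30 : Real.sqrt 30 = Real.sqrt 2 * (Real.sqrt 3 * Real.sqrt 5) := by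
    rw [show (30:ℝ) = 2*(3*5) by norm_num, Real.sqrt_mul (by norm_num),
      Real.sqrt_mul (by norm_num)]
  have h6 : Real.sqrt 6 = Real.sqrt 2 * Real.sqrt 3 := by
    rw [show (6:ℝ) = 2*3 by norm_num, Real.sqrt_mul (by norm_num)]
  -- f components
  have hf03 : f 0 - f 3 = Real.sqrt 2 * ρ₁ := by
    simp [hf, eB1, eB2, eB3, PiLp.add_apply, PiLp.smul_apply, smul_eq_mul]
    ring
  have hf1l : f 1 = -ρ₁ := by
    simp [hf, eB1, eB2, eB3, PiLp.add_apply, PiLp.smul_apply, smul_eq_mul]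
    rw [h2, h3, h10, h30]
    field_simp
    ring_nf
    simp only [Real.sq_sqrt (by norm_num : (0:ℝ) ≤ 2), Real.sq_sqrt (by norm_num : (0:ℝ) ≤ 5)]
    ring
  have hf2l : f 2 = ρ₁ := by
    simp [hf, eB1, eB2, eB3, PiLp.add_apply, PiLp.smul_apply, smul_eq_mul]
    rw [h3, h10, h6]
    field_simp
    ring_nf
    simp only [Real.sq_sqrt (by norm_num : (0:ℝ) ≤ 2)]
    try ring
  -- final assembly
  have goal12 : 12 * B * (⟪g, VB f⟫ : ℝ) = 6 * ρ₁ := by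
    simp [PiLp.inner_apply, RCLike.inner_apply, Fin.sum_univ_four, VB]
    rw [e0, e2, e3]
    linear_combination (-2*Real.sqrt 2*(f 0 - f 3) + (f 1 - f 2)) * hs6 +
      2*Real.sqrt 2 * hf03 - hf1l + hf2l + 2*ρ₁ * ha
  have h2B : (2:ℝ) * B ≠ 0 := by positivity
  rw [eq_div_iff h2B]
  linear_combination goal12 / 6
end

section
/- (Lemma 8, identity (5.10)) Let ρ₁ ∈ ℝ, ρ₂ = −(2/√5)ρ₁, ρ₃ = (2√3/√10)ρ₁, f = ρ₁e₁ + ρ₂e₂ + ρ₃e₃, and let P denote the orthogonal projection of ℝ⁴ onto the null space of L. If g ∈ ℝ⁴ is orthogonal to the null space of L and satisfies Lg = Ve₂ − P(Ve₂), then ⟨g, Vf⟩ = −ρ₁/(4B√5). -/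
open Finset Matrix

open scoped RealInnerProductSpace

/- ### Auxiliary material -/

noncomputable def wvB : EuclideanSpace ℝ (Fin 4) := WithLp.toLp 2 ![Real.sqrt 2, -1, -1, Real.sqrt 2]

lemma innerB4 (x y : EuclideanSpace ℝ (Fin 4)) :
    ⟪x, y⟫ = x 0 * y 0 + x 1 * y 1 + x 2 * y 2 + x 3 * y 3 := by
  simp [PiLp.inner_apply, Fin.sum_univ_four, mul_comm]

lemma LB_applyB (B : ℝ) (x : EuclideanSpace ℝ (Fin 4)) :
    LB B x = ((B / 3) * ⟪wvB, x⟫) • wvB := by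
  have h2 : Real.sqrt 2 ^ 2 = 2 := Real.sq_sqrt (by norm_num)
  ext i
  have h : LB B x i = (LBmat B *ᵥ (WithLp.equiv 2 (Fin 4 → ℝ) x)) i := rfl
  rw [h]
  fin_cases i <;>
    simp [LBmat, Matrix.mulVec, dotProduct, Fin.sum_univ_four, innerB4, wvB,
      PiLp.toLp_apply] <;> ring_nf <;> rw [h2] <;> ring

lemma sB10 : Real.sqrt 10 = Real.sqrt 2 * Real.sqrt 5 := by
  rw [show (10:ℝ) = 2*5 by norm_num, Real.sqrt_mul (by norm_num)]
lemma sB30 : Real.sqrt 30 = Real.sqrt 2 * (Real.sqrt 3 * Real.sqrt 5) := by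
  rw [show (30:ℝ) = 2*(3*5) by norm_num, Real.sqrt_mul (by norm_num),
    Real.sqrt_mul (by norm_num)]
lemma sB15 : Real.sqrt 15 = Real.sqrt 3 * Real.sqrt 5 := by
  rw [show (15:ℝ) = 3*5 by norm_num, Real.sqrt_mul (by norm_num)]
lemma sB6 : Real.sqrt 6 = Real.sqrt 2 * Real.sqrt 3 := by
  rw [show (6:ℝ) = 2*3 by norm_num, Real.sqrt_mul (by norm_num)]

lemma inner_wvB_wvB : ⟪wvB, wvB⟫ = 6 := by
  have m2 : Real.sqrt 2 * Real.sqrt 2 = 2 := Real.mul_self_sqrt (by norm_num)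
  rw [innerB4]
  simp [wvB, PiLp.toLp_apply]
  nlinarith [m2]

lemma inner_wvB_VBe2 : ⟪wvB, VB eB2⟫ = -(1 / Real.sqrt 5) := by
  have p2 : (0:ℝ) < Real.sqrt 2 := Real.sqrt_pos.mpr (by norm_num)
  have p5 : (0:ℝ) < Real.sqrt 5 := Real.sqrt_pos.mpr (by norm_num)
  rw [innerB4]
  simp only [wvB, VB, eB2, PiLp.toLp_apply, Matrix.cons_val_zero, Matrix.cons_val_one, Matrix.head_cons,
    Matrix.cons_val_two, Matrix.tail_cons, Matrix.cons_val_three]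
  rw [sB10]
  field_simp
  ring

lemma inner_wvB_VBf (ρ₁ ρ₂ ρ₃ : ℝ) (h2 : ρ₂ = -(2 / Real.sqrt 5) * ρ₁)
    (h3 : ρ₃ = 2 * Real.sqrt 3 / Real.sqrt 10 * ρ₁) :
    ⟪wvB, VB (ρ₁ • eB1 + ρ₂ • eB2 + ρ₃ • eB3)⟫ = 3 * ρ₁ := by
  have p2 : (0:ℝ) < Real.sqrt 2 := Real.sqrt_pos.mpr (by norm_num)
  have p3 : (0:ℝ) < Real.sqrt 3 := Real.sqrt_pos.mpr (by norm_num)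
  have p5 : (0:ℝ) < Real.sqrt 5 := Real.sqrt_pos.mpr (by norm_num)
  have e2 : Real.sqrt 2 ^ 2 = 2 := Real.sq_sqrt (by norm_num)
  have e3 : Real.sqrt 3 ^ 2 = 3 := Real.sq_sqrt (by norm_num)
  have e5 : Real.sqrt 5 ^ 2 = 5 := Real.sq_sqrt (by norm_num)
  have e26 : Real.sqrt 2 ^ 6 = 8 := by
    rw [show Real.sqrt 2 ^ 6 = (Real.sqrt 2 ^ 2) ^ 3 by ring, e2]; norm_num
  have e28 : Real.sqrt 2 ^ 8 = 16 := by
    rw [show Real.sqrt 2 ^ 8 = (Real.sqrt 2 ^ 2) ^ 4 by ring, e2]; norm_num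
  have e210 : Real.sqrt 2 ^ 10 = 32 := by
    rw [show Real.sqrt 2 ^ 10 = (Real.sqrt 2 ^ 2) ^ 5 by ring, e2]; norm_num
  have e34 : Real.sqrt 3 ^ 4 = 9 := by
    rw [show Real.sqrt 3 ^ 4 = (Real.sqrt 3 ^ 2) ^ 2 by ring, e3]; norm_num
  have e59 : Real.sqrt 5 ^ 9 = 625 * Real.sqrt 5 := by
    rw [show Real.sqrt 5 ^ 9 = (Real.sqrt 5 ^ 2) ^ 4 * Real.sqrt 5 by ring, e5]; norm_num
  have e511 : Real.sqrt 5 ^ 11 = 3125 * Real.sqrt 5 := by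
    rw [show Real.sqrt 5 ^ 11 = (Real.sqrt 5 ^ 2) ^ 5 * Real.sqrt 5 by ring, e5]; norm_num
  rw [innerB4]
  simp only [wvB, VB, eB1, eB2, eB3, PiLp.toLp_apply, PiLp.add_apply, PiLp.smul_apply, smul_eq_mul,
    Matrix.cons_val_zero, Matrix.cons_val_one, Matrix.head_cons,
    Matrix.cons_val_two, Matrix.tail_cons, Matrix.cons_val_three]
  subst h2 h3
  rw [sB10, sB30, sB15, sB6]
  field_simp
  ring_nf
  rw [show Real.sqrt 2 ^ 4 = (Real.sqrt 2 ^ 2) ^ 2 by ring, e2, e5]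
  ring

lemma ker_orth (B : ℝ) (hB : 0 < B) (h : EuclideanSpace ℝ (Fin 4))
    (hh : h ∈ LinearMap.ker (LB B)) : ⟪wvB, h⟫ = 0 := by
  have h0 : LB B h = 0 := hh
  rw [LB_applyB] at h0
  have h1 := congrArg (fun v => v 1) h0
  have h2 : (B / 3 * ⟪wvB, h⟫) * (-1) = 0 := by
    simpa [wvB] using h1
  have hB3 : B / 3 ≠ 0 := by positivity
  have := mul_eq_zero.mp h2
  rcases this with h | h
  · rcases mul_eq_zero.mp h with h' | h'
    · exact absurd h' hB3
    · exact h'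
  · norm_num at h

/-- Lemma 8, identity (5.10): with `ρ₂ = −(2/√5)ρ₁`, `ρ₃ = (2√3/√10)ρ₁`,
`f = ρ₁e₁ + ρ₂e₂ + ρ₃e₃` and `P` the orthogonal projection onto the null space of `L`,
if `g ⟂ ker L` and `Lg = Ve₂ − P(Ve₂)`, then `⟨g, Vf⟩ = −ρ₁/(4B√5)`. -/
theorem broadwell_inner_Linv_Ve2 (B : ℝ) (hB : 0 < B) (ρ₁ ρ₂ ρ₃ : ℝ)
    (h2 : ρ₂ = -(2 / Real.sqrt 5) * ρ₁) (h3 : ρ₃ = 2 * Real.sqrt 3 / Real.sqrt 10 * ρ₁)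
    (f : EuclideanSpace ℝ (Fin 4)) (hf : f = ρ₁ • eB1 + ρ₂ • eB2 + ρ₃ • eB3)
    (g : EuclideanSpace ℝ (Fin 4))
    (hg₁ : ∀ h ∈ LinearMap.ker (LB B), ⟪g, h⟫ = 0)
    (hg₂ : LB B g = VB eB2 -
      (Submodule.orthogonalProjectionOnto (LinearMap.ker (LB B)) (VB eB2) : EuclideanSpace ℝ (Fin 4))) :
    ⟪g, VB f⟫ = -(ρ₁ / (4 * B * Real.sqrt 5)) := by
  have p5 : (0:ℝ) < Real.sqrt 5 := Real.sqrt_pos.mpr (by norm_num)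
  -- inner product of wv with g
  have hP0 : ⟪wvB, (Submodule.orthogonalProjectionOnto (LinearMap.ker (LB B)) (VB eB2) :
      EuclideanSpace ℝ (Fin 4))⟫ = 0 :=
    ker_orth B hB _ (SetLike.coe_mem _)
  have hL : ⟪wvB, LB B g⟫ = 2 * B * ⟪wvB, g⟫ := by
    rw [LB_applyB, real_inner_smul_right, inner_wvB_wvB]; ring
  have hkey : 2 * B * ⟪wvB, g⟫ = -(1 / Real.sqrt 5) := by
    rw [← hL, hg₂, inner_sub_right, hP0, inner_wvB_VBe2]; ring
  have hgw : ⟪wvB, g⟫ = -(1 / Real.sqrt 5) / (2 * B) := by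
    field_simp at hkey ⊢
    linarith
  -- decomposition of VB f
  have hWVf : ⟪wvB, VB f⟫ = 3 * ρ₁ := by
    rw [hf]; exact inner_wvB_VBf ρ₁ ρ₂ ρ₃ h2 h3
  have hk : VB f - (ρ₁ / 2) • wvB ∈ LinearMap.ker (LB B) := by
    rw [LinearMap.mem_ker, LB_applyB]
    have h0 : ⟪wvB, VB f - (ρ₁ / 2) • wvB⟫ = 0 := by
      rw [inner_sub_right, real_inner_smul_right, hWVf, inner_wvB_wvB]; ring
    rw [h0]
    simp
  have hdec : ⟪g, VB f⟫ = (ρ₁ / 2) * ⟪wvB, g⟫ := by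
    have : VB f = (ρ₁ / 2) • wvB + (VB f - (ρ₁ / 2) • wvB) := by abel
    rw [this, inner_add_right, hg₁ _ hk, real_inner_smul_right, real_inner_comm]
    ring
  rw [hdec, hgw]
  field_simp
  ring
end
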